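/- With a > 0, b = 2, R = 2/(3+√(1+8a)), and β_N, ψ_N, φ_N defined as above, for every N ≥ 1 and t ∈ [0,R]: β_N(t) = φ_N(t)·ψ_N(t), β_{N+1}(t) ≤ β_N(t), and ψ_{N+1}(t) ≥ ψ_N(t). -/

import Mathlib

noncomputable def phiN (a b : ℝ) : ℕ → ℝ → ℝ
  | 0, _ => 1
  | N+1, t => a * t^2 * phiN a b N t / ((1 - t) * (1 - b*t) - a * t^2 * phiN a b N t)

noncomputable def betaN (a : ℝ) (N : ℕ) (t : ℝ) : ℝ :=
  a * t^2 * phiN a 2 (N-1) t / (1 - t - a * t^2 * phiN a 2 (N-1) t)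

noncomputable def psiN (a : ℝ) (N : ℕ) (t : ℝ) : ℝ :=
  ((1 - t) * (1 - 2*t) - a * t^2 * phiN a 2 (N-1) t) / (1 - t - a * t^2 * phiN a 2 (N-1) t)

private lemma frac_mono (c P x y : ℝ) (hc : 0 ≤ c) (h2 : 2*c ≤ P) (hP : 0 < P)
    (hx : 0 ≤ x) (hxy : x ≤ y) (hy : y ≤ 1) :
    c*x/(P - c*x) ≤ c*y/(P - c*y) := by
  have hdx : 0 < P - c*x := by nlinarith
  have hdy : 0 < P - c*y := by nlinarith
  rw [div_le_div_iff₀ hdx hdy]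
  nlinarith [mul_nonneg (mul_nonneg hc (sub_nonneg.2 hxy)) hP.le]

theorem betaN_psiN_properties (a : ℝ) (ha : 0 < a)
    (R : ℝ) (hR : R = 2 / (3 + Real.sqrt (1 + 8*a))) :
    ∀ N : ℕ, 1 ≤ N → ∀ t ∈ Set.Icc (0:ℝ) R,
      betaN a N t = phiN a 2 N t * psiN a N t ∧
      betaN a (N+1) t ≤ betaN a N t ∧
      psiN a N t ≤ psiN a (N+1) t := by
  intro N hN t ht
  obtain ⟨ht0, htR⟩ := ht
  set s := Real.sqrt (1 + 8*a) with hs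
  have hs0 : 0 ≤ s := Real.sqrt_nonneg _
  have hs2 : s^2 = 1 + 8*a := Real.sq_sqrt (by nlinarith)
  have hs1 : 1 < s := by nlinarith
  have hR0 : 0 < R := by rw [hR]; positivity
  have hRhalf : R < 1/2 := by
    rw [hR, div_lt_iff₀ (by linarith)]; nlinarith
  have hkey : 2*a*R^2 = (1-R)*(1-2*R) := by
    rw [hR]; field_simp; nlinarith
  have ht2 : t < 1/2 := lt_of_le_of_lt htR hRhalf
  have hP : 0 < (1-t)*(1-2*t) := by nlinarith
  have htR2 : a*t^2 ≤ a*R^2 :=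
    mul_le_mul_of_nonneg_left (pow_le_pow_left₀ ht0 htR 2) ha.le
  have hK : 2*(a*t^2) ≤ (1-t)*(1-2*t) := by
    nlinarith [mul_nonneg (sub_nonneg.2 htR) (show (0:ℝ) ≤ 3 - 2*R - 2*t by linarith)]
  have hc0 : 0 ≤ a*t^2 := by positivity
  have hrec : ∀ K : ℕ, phiN a 2 (K+1) t =
      a * t^2 * phiN a 2 K t / ((1-t)*(1-2*t) - a*t^2*phiN a 2 K t) := by
    intro K; rw [phiN]
  -- bounds on phi
  have hphi : ∀ M : ℕ, 0 ≤ phiN a 2 M t ∧ phiN a 2 M t ≤ 1 := by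
    intro M
    induction M with
    | zero => simp [phiN]
    | succ M ih =>
      obtain ⟨h0, h1⟩ := ih
      have hnum : 0 ≤ a*t^2 * phiN a 2 M t := mul_nonneg hc0 h0
      have hnum1 : a*t^2 * phiN a 2 M t ≤ a*t^2 := by nlinarith
      have hdenpos : 0 < (1-t)*(1-2*t) - a*t^2*phiN a 2 M t := by linarith
      rw [hrec M]
      constructor
      · exact div_nonneg hnum hdenpos.le
      · rw [div_le_one hdenpos]; linarith
  -- monotonicity of phi in N
  have hmono : ∀ M : ℕ, phiN a 2 (M+1) t ≤ phiN a 2 M t := by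
    intro M
    induction M with
    | zero =>
      have := (hphi 1).2
      simpa [phiN] using this
    | succ M ih =>
      rw [hrec (M+1), hrec M]
      exact frac_mono _ _ _ _ hc0 hK hP (hphi (M+1)).1 ih (hphi M).2
  obtain ⟨M, rfl⟩ : ∃ M, N = M + 1 := ⟨N - 1, (Nat.succ_pred_eq_of_pos hN).symm⟩
  have hE : ∀ K : ℕ, 0 < 1 - t - a*t^2*phiN a 2 K t := by
    intro K
    have h0 := (hphi K).1
    have h1 := (hphi K).2
    nlinarith
  have hD : ∀ K : ℕ, 0 < (1-t)*(1-2*t) - a*t^2*phiN a 2 K t := by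
    intro K
    have h0 := (hphi K).1
    have h1 := (hphi K).2
    nlinarith
  refine ⟨?_, ?_, ?_⟩
  · simp only [betaN, psiN, Nat.add_sub_cancel]
    rw [hrec M]
    have hD' := (hD M).ne'
    have hE' := (hE M).ne'
    field_simp
    exact (mul_div_cancel_right₀ _ (by intro h0; apply hD'; linear_combination h0)).symm
  · simp only [betaN, Nat.add_sub_cancel]
    have h := hmono M
    rw [div_le_div_iff₀ (hE (M+1)) (hE M)]
    set p := phiN a 2 M t
    set q := phiN a 2 (M+1) t
    have hnn : 0 ≤ a*t^2*(p - q)*(1-t) :=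
      mul_nonneg (mul_nonneg hc0 (sub_nonneg.2 h)) (by linarith)
    have hex : a*t^2*p*(1 - t - a*t^2*q) - a*t^2*q*(1 - t - a*t^2*p)
        = a*t^2*(p - q)*(1-t) := by ring
    linarith
  · simp only [psiN, Nat.add_sub_cancel]
    have h := hmono M
    rw [div_le_div_iff₀ (hE M) (hE (M+1))]
    set p := phiN a 2 M t
    set q := phiN a 2 (M+1) t
    have h2t : (0:ℝ) ≤ (1-t)*(2*t) := mul_nonneg (by linarith) (by linarith)
    have hnn : 0 ≤ a*t^2*(p - q)*((1-t)*(2*t)) :=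
      mul_nonneg (mul_nonneg hc0 (sub_nonneg.2 h)) h2t
    have hex : ((1-t)*(1-2*t) - a*t^2*q)*(1 - t - a*t^2*p)
        - ((1-t)*(1-2*t) - a*t^2*p)*(1 - t - a*t^2*q)
        = a*t^2*(p - q)*((1-t)*(2*t)) := by ring
    linarith
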